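/- Let M be a set and rk a diversity rank function on M. The induced dependence relation =(x,y), defined by rk(x ∪ y) = rk(x), satisfies Armstrong's Axioms: (Reflexivity) =(x ∪ y, x); (Augmentation) if =(x,y) then =(x ∪ z, y ∪ z); (Transitivity) if =(x,y) and =(y,z) then =(x,z), for all finite x, y, z ⊆ M. -/
import Mathlib


/-- `rk` is a diversity rank function: it maps finite sets to nonnegative reals and
satisfies axioms R1--R4. -/
def IsDivRank {α : Type*} [DecidableEq α] (rk : Finset α → ℝ) : Prop :=
  (∀ x : Finset α, 0 ≤ rk x) ∧
  rk ∅ = 0 ∧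
  (∀ x y : Finset α, rk x ≤ rk (x ∪ y) ∧ rk (x ∪ y) ≤ rk x + rk y) ∧
  (∀ x y z : Finset α, rk (x ∪ y) = rk x → rk (x ∪ y ∪ z) = rk (x ∪ z)) ∧
  (∀ x y z : Finset α, rk (x ∪ y ∪ z) = rk x + rk (y ∪ z) → rk (x ∪ y) = rk x + rk y)

/-- `y` depends on `x` (written `=(x,y)`) under `rk`. -/
def Dep {α : Type*} [DecidableEq α] (rk : Finset α → ℝ) (x y : Finset α) : Prop :=
  rk (x ∪ y) = rk x

theorem dep_armstrong_axioms {α : Type*} [DecidableEq α] (rk : Finset α → ℝ)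
    (h : IsDivRank rk) :
    (∀ x y : Finset α, Dep rk (x ∪ y) x) ∧
    (∀ x y z : Finset α, Dep rk x y → Dep rk (x ∪ z) (y ∪ z)) ∧
    (∀ x y z : Finset α, Dep rk x y → Dep rk y z → Dep rk x z) := by
  obtain ⟨h0, he, hmono, hR3, hR4⟩ := h
  refine ⟨?_, ?_, ?_⟩
  · intro x y
    show rk (x ∪ y ∪ x) = rk (x ∪ y)
    have : x ∪ y ∪ x = x ∪ y := by
      ext a; simp [Finset.mem_union]; tauto
    rw [this]
  · intro x y z hxy
    show rk (x ∪ z ∪ (y ∪ z)) = rk (x ∪ z)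
    have h1 := hR3 x y z hxy
    have : x ∪ z ∪ (y ∪ z) = x ∪ y ∪ z := by
      ext a; simp [Finset.mem_union]; tauto
    rw [this, h1]
  · intro x y z hxy hyz
    show rk (x ∪ z) = rk x
    have h1 := hR3 x y z hxy
    have h2 := hR3 y z x hyz
    have e1 : y ∪ z ∪ x = x ∪ y ∪ z := by
      ext a; simp [Finset.mem_union]; tauto
    have e2 : y ∪ x = x ∪ y := Finset.union_comm _ _
    rw [e1, e2, hxy] at h2
    rw [← h1, h2]
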